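/- Let (H, ‖·‖) be a separable Hilbert space, A ∈ 𝒦(H) a compact operator, and let A_n := Σ_{i=1}^n σ_i(A) ⟨·, u_i⟩ v_i be a truncation of the canonical (SVD) expansion A = Σ_{i=1}^∞ σ_i(A) ⟨·, u_i⟩ v_i with orthonormal {u_i}, {v_i}. Then ‖A − A_n‖_HS² = inf{‖A − L‖_HS² : L ∈ 𝒦(H), rank(L) ≤ n} = Σ_{i=n+1}^∞ σ_i(A)², where ‖·‖_HS is the Hilbert–Schmidt norm (and both sides equal +∞ if A is not Hilbert–Schmidt). -/

import Mathlib

open scoped InnerProductSpace RealInnerProductSpace ENNReal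
open Filter Topology

/-- The `n`-th singular value of an operator `A`, following Allahverdiev's
characterization: `σ_n(A) := inf {‖A - L‖ : L compact, rank L ≤ n - 1}`. -/
noncomputable def sval {H : Type*} [NormedAddCommGroup H] [InnerProductSpace ℝ H]
    (A : H →L[ℝ] H) (n : ℕ) : ℝ :=
  sInf {r : ℝ | ∃ L : H →L[ℝ] H, IsCompactOperator L ∧
    Module.rank ℝ (LinearMap.range (L : H →ₗ[ℝ] H)) ≤ ((n - 1 : ℕ) : Cardinal) ∧ r = ‖A - L‖}

/-- The rank-one operator `x ↦ ⟪u, x⟫ • v`. -/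
noncomputable def rankOne {H : Type*} [NormedAddCommGroup H] [InnerProductSpace ℝ H]
    (u v : H) : H →L[ℝ] H := (innerSL ℝ u).smulRight v

/-- The squared Hilbert–Schmidt norm `‖A‖_HS² = Σ_{i=1}^∞ σ_i(A)²`, valued in `ℝ≥0∞`
(it equals `+∞` exactly when `A` is not Hilbert–Schmidt). -/
noncomputable def hsNormSq {H : Type*} [NormedAddCommGroup H] [InnerProductSpace ℝ H]
    (A : H →L[ℝ] H) : ℝ≥0∞ := ∑' i : ℕ, ENNReal.ofReal (sval A (i + 1) ^ 2)

section Aux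
variable {H : Type*} [NormedAddCommGroup H] [InnerProductSpace ℝ H]

lemma svalSet_nonempty (A : H →L[ℝ] H) (n : ℕ) :
    Set.Nonempty {r : ℝ | ∃ L : H →L[ℝ] H, IsCompactOperator L ∧
      Module.rank ℝ (LinearMap.range (L : H →ₗ[ℝ] H)) ≤ ((n - 1 : ℕ) : Cardinal) ∧ r = ‖A - L‖} := by
  refine ⟨‖A - 0‖, 0, isCompactOperator_zero, ?_, rfl⟩
  have : LinearMap.range ((0 : H →L[ℝ] H) : H →ₗ[ℝ] H) = ⊥ := by
    ext x; simp [eq_comm]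
  rw [this]
  simp

lemma svalSet_bddBelow (A : H →L[ℝ] H) (n : ℕ) :
    BddBelow {r : ℝ | ∃ L : H →L[ℝ] H, IsCompactOperator L ∧
      Module.rank ℝ (LinearMap.range (L : H →ₗ[ℝ] H)) ≤ ((n - 1 : ℕ) : Cardinal) ∧ r = ‖A - L‖} := by
  refine ⟨0, ?_⟩
  rintro r ⟨L, -, -, rfl⟩
  positivity

lemma sval_nonneg (A : H →L[ℝ] H) (n : ℕ) : 0 ≤ sval A n := by
  apply Real.sInf_nonneg
  rintro r ⟨L, -, -, rfl⟩
  positivity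

lemma sval_le (A : H →L[ℝ] H) (n : ℕ) {L : H →L[ℝ] H} (hc : IsCompactOperator L)
    (hr : Module.rank ℝ (LinearMap.range (L : H →ₗ[ℝ] H)) ≤ ((n - 1 : ℕ) : Cardinal)) :
    sval A n ≤ ‖A - L‖ :=
  csInf_le (svalSet_bddBelow A n) ⟨L, hc, hr, rfl⟩

lemma sval_antitone (A : H →L[ℝ] H) {m n : ℕ} (h : m ≤ n) : sval A n ≤ sval A m := by
  apply csInf_le_csInf (svalSet_bddBelow A n) (svalSet_nonempty A m)
  rintro r ⟨L, hc, hr, rfl⟩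
  exact ⟨L, hc, hr.trans (Nat.cast_le.mpr (Nat.sub_le_sub_right h 1)), rfl⟩

end Aux

section Aux2
variable {H : Type*} [NormedAddCommGroup H] [InnerProductSpace ℝ H]

lemma range_add_le (L M : H →L[ℝ] H) :
    LinearMap.range ((L + M : H →L[ℝ] H) : H →ₗ[ℝ] H) ≤ LinearMap.range (L : H →ₗ[ℝ] H) ⊔ LinearMap.range (M : H →ₗ[ℝ] H) := by
  rintro y ⟨x, rfl⟩
  exact Submodule.mem_sup.mpr ⟨L x, ⟨x, rfl⟩, M x, ⟨x, rfl⟩, rfl⟩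

/-- Key inequality: if `rank L ≤ k` then `σ_{k+j+1}(A) ≤ σ_{j+1}(A - L)`. -/
lemma sval_shift_le (A L : H →L[ℝ] H) (hc : IsCompactOperator L) (k j : ℕ)
    (hr : Module.rank ℝ (LinearMap.range (L : H →ₗ[ℝ] H)) ≤ (k : Cardinal)) :
    sval A (k + j + 1) ≤ sval (A - L) (j + 1) := by
  apply le_csInf (svalSet_nonempty _ _)
  rintro r ⟨M, hMc, hMr, rfl⟩
  have hcomp : IsCompactOperator (L + M : H →L[ℝ] H) := by
    have := hc.add hMc
    exact this
  have hrank : Module.rank ℝ (LinearMap.range ((L + M : H →L[ℝ] H) : H →ₗ[ℝ] H)) ≤ ((k + j + 1 - 1 : ℕ) : Cardinal) := by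
    refine (Submodule.rank_mono (range_add_le L M)).trans ?_
    have h1 : Module.rank ℝ ↥(LinearMap.range (L : H →ₗ[ℝ] H) ⊔ LinearMap.range (M : H →ₗ[ℝ] H)) ≤
        Module.rank ℝ (LinearMap.range (L : H →ₗ[ℝ] H)) + Module.rank ℝ (LinearMap.range (M : H →ₗ[ℝ] H)) := by
      have := Submodule.rank_sup_add_rank_inf_eq (LinearMap.range (L : H →ₗ[ℝ] H)) (LinearMap.range (M : H →ₗ[ℝ] H))
      calc Module.rank ℝ ↥(LinearMap.range (L : H →ₗ[ℝ] H) ⊔ LinearMap.range (M : H →ₗ[ℝ] H))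
          ≤ Module.rank ℝ ↥(LinearMap.range (L : H →ₗ[ℝ] H) ⊔ LinearMap.range (M : H →ₗ[ℝ] H)) +
            Module.rank ℝ ↥(LinearMap.range (L : H →ₗ[ℝ] H) ⊓ LinearMap.range (M : H →ₗ[ℝ] H)) := le_self_add
        _ = _ := this
    refine h1.trans ?_
    have h2 : Module.rank ℝ (LinearMap.range (M : H →ₗ[ℝ] H)) ≤ ((j : ℕ) : Cardinal) := by
      simpa using hMr
    refine (add_le_add hr h2).trans ?_
    simp [← Nat.cast_add]
  have := sval_le A (k + j + 1) hcomp hrank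
  refine this.trans (le_of_eq ?_)
  rw [show A - (L + M) = A - L - M by abel]

end Aux2

section Aux3
variable {H : Type*} [NormedAddCommGroup H] [InnerProductSpace ℝ H]

lemma rankOne_apply (u v x : H) : rankOne u v x = ⟪u, x⟫_ℝ • v := rfl

lemma sum_rankOne_apply (u v : ℕ → H) (c : ℕ → ℝ) (s : Finset ℕ) (x : H) :
    (∑ i ∈ s, c i • rankOne (u i) (v i)) x = ∑ i ∈ s, (c i * ⟪u i, x⟫_ℝ) • v i := by
  simp [rankOne_apply, smul_smul]

/-- Norm of a linear combination of rank-one operators built from orthonormal families. -/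
lemma norm_sum_rankOne_le {u v : ℕ → H} (hu : Orthonormal ℝ u) (hv : Orthonormal ℝ v)
    (c : ℕ → ℝ) (s : Finset ℕ) (C : ℝ) (hC0 : 0 ≤ C) (hC : ∀ i ∈ s, |c i| ≤ C) :
    ‖∑ i ∈ s, c i • rankOne (u i) (v i)‖ ≤ C := by
  refine ContinuousLinearMap.opNorm_le_bound _ hC0 fun x => ?_
  rw [sum_rankOne_apply]
  have hsq : ‖∑ i ∈ s, (c i * ⟪u i, x⟫_ℝ) • v i‖ ^ 2 = ∑ i ∈ s, (c i * ⟪u i, x⟫_ℝ) ^ 2 := by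
    classical
    rw [← real_inner_self_eq_norm_sq]
    rw [inner_sum]
    refine Finset.sum_congr rfl fun i hi => ?_
    rw [real_inner_smul_right,
      real_inner_comm (v i) (∑ i ∈ s, (c i * ⟪u i, x⟫_ℝ) • v i), hv.inner_right_sum _ hi]
    ring
  have hb : ∑ i ∈ s, (c i * ⟪u i, x⟫_ℝ) ^ 2 ≤ C ^ 2 * ‖x‖ ^ 2 := by
    have h1 : ∑ i ∈ s, (c i * ⟪u i, x⟫_ℝ) ^ 2 ≤ ∑ i ∈ s, C ^ 2 * ⟪u i, x⟫_ℝ ^ 2 := by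
      refine Finset.sum_le_sum fun i hi => ?_
      rw [mul_pow]
      have : c i ^ 2 ≤ C ^ 2 := by
        rw [← sq_abs]
        exact pow_le_pow_left₀ (abs_nonneg _) (hC i hi) 2
      exact mul_le_mul_of_nonneg_right this (sq_nonneg _)
    rw [← Finset.mul_sum] at h1
    refine h1.trans (mul_le_mul_of_nonneg_left ?_ (sq_nonneg C))
    have := hu.sum_inner_products_le x (s := s)
    simpa [sq_abs] using this
  have hnn : (0:ℝ) ≤ C * ‖x‖ := mul_nonneg hC0 (norm_nonneg _)
  nlinarith [norm_nonneg (∑ i ∈ s, (c i * ⟪u i, x⟫_ℝ) • v i)]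

/-- A finite sum of rank-one operators is compact and has rank at most `s.card`. -/
lemma sum_rankOne_compact_rank (u v : ℕ → H) (c : ℕ → ℝ) (s : Finset ℕ) :
    IsCompactOperator (∑ i ∈ s, c i • rankOne (u i) (v i) : H →L[ℝ] H) ∧
    Module.rank ℝ (LinearMap.range ((∑ i ∈ s, c i • rankOne (u i) (v i) : H →L[ℝ] H) : H →ₗ[ℝ] H)) ≤
      (s.card : Cardinal) := by
  set F : H →L[ℝ] H := ∑ i ∈ s, c i • rankOne (u i) (v i) with hF
  set V : Submodule ℝ H := Submodule.span ℝ (v '' ↑s) with hV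
  have hmem : ∀ x, F x ∈ V := by
    intro x
    rw [hF, sum_rankOne_apply]
    exact Submodule.sum_mem _ fun i hi =>
      Submodule.smul_mem _ _ (Submodule.subset_span ⟨i, hi, rfl⟩)
  have hrange : LinearMap.range (F : H →ₗ[ℝ] H) ≤ V := by
    rintro y ⟨x, rfl⟩; exact hmem x
  constructor
  · haveI : FiniteDimensional ℝ V := FiniteDimensional.span_of_finite ℝ (s.finite_toSet.image v)
    refine ⟨Subtype.val '' Metric.closedBall (0 : V) ‖F‖,
      (ProperSpace.isCompact_closedBall _ _).image continuous_subtype_val, ?_⟩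
    refine Filter.mem_of_superset (Metric.closedBall_mem_nhds (0 : H) one_pos) ?_
    intro x hx
    refine ⟨⟨F x, hmem x⟩, ?_, rfl⟩
    rw [Metric.mem_closedBall, dist_zero_right]
    calc ‖(⟨F x, hmem x⟩ : V)‖ = ‖F x‖ := rfl
      _ ≤ ‖F‖ * ‖x‖ := F.le_opNorm x
      _ ≤ ‖F‖ * 1 := by
          refine mul_le_mul_of_nonneg_left ?_ (norm_nonneg _)
          simpa [Metric.mem_closedBall, dist_zero_right] using hx
      _ = ‖F‖ := mul_one _
  · refine (Submodule.rank_mono hrange).trans ?_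
    refine (rank_span_le _).trans ?_
    classical
    have himg : (v '' ↑s) = ↑(s.image v) := (Finset.coe_image).symm
    rw [himg]
    refine le_trans (le_of_eq (Cardinal.mk_coe_finset)) ?_
    exact Nat.cast_le.mpr Finset.card_image_le

end Aux3

section Aux4
variable {H : Type*} [NormedAddCommGroup H] [InnerProductSpace ℝ H]

lemma tail_norm_le (A : H →L[ℝ] H) {u v : ℕ → H} (hu : Orthonormal ℝ u) (hv : Orthonormal ℝ v)
    (hexp : Tendsto (fun m : ℕ => ∑ i ∈ Finset.range m, sval A (i + 1) • rankOne (u i) (v i))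
      atTop (𝓝 A)) (m : ℕ) :
    ‖A - ∑ i ∈ Finset.range m, sval A (i + 1) • rankOne (u i) (v i)‖ ≤ sval A (m + 1) := by
  set T : ℕ → (H →L[ℝ] H) :=
    fun p => ∑ i ∈ Finset.range p, sval A (i + 1) • rankOne (u i) (v i) with hT
  have htends : Tendsto (fun p => ‖T p - T m‖) atTop (𝓝 ‖A - T m‖) :=
    (hexp.sub tendsto_const_nhds).norm
  refine le_of_tendsto htends ?_
  filter_upwards [eventually_ge_atTop m] with p hp
  have hsub : Finset.range m ⊆ Finset.range p := Finset.range_subset_range.mpr hp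
  have hdiff : T p - T m =
      ∑ i ∈ Finset.range p \ Finset.range m, sval A (i + 1) • rankOne (u i) (v i) := by
    rw [eq_comm, hT]
    exact Finset.sum_sdiff_eq_sub hsub
  rw [hdiff]
  refine norm_sum_rankOne_le hu hv _ _ _ (sval_nonneg A (m + 1)) fun i hi => ?_
  rw [Finset.mem_sdiff, Finset.mem_range, Finset.mem_range, not_lt] at hi
  rw [abs_of_nonneg (sval_nonneg A _)]
  exact sval_antitone A (by omega)

end Aux4

/-- For a compact operator `A` on a separable Hilbert space with canonical
(SVD) expansion `A = Σ_{i=1}^∞ σ_i(A) ⟨·, u_i⟩ v_i`, the truncation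
`A_n = Σ_{i=1}^n σ_i(A) ⟨·, u_i⟩ v_i` satisfies
`‖A − A_n‖_HS² = inf {‖A − L‖_HS² : L compact, rank L ≤ n} = Σ_{i=n+1}^∞ σ_i(A)²`,
all three quantities being possibly `+∞` (namely when `A` is not Hilbert–Schmidt). -/
theorem svd_truncation_optimal_hs
    {H : Type*} [NormedAddCommGroup H] [InnerProductSpace ℝ H]
    [CompleteSpace H] [TopologicalSpace.SeparableSpace H]
    (A : H →L[ℝ] H) (hA : IsCompactOperator A)
    (u v : ℕ → H) (hu : Orthonormal ℝ u) (hv : Orthonormal ℝ v)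
    (hexp : Tendsto (fun m : ℕ => ∑ i ∈ Finset.range m, sval A (i + 1) • rankOne (u i) (v i))
      atTop (𝓝 A))
    (n : ℕ) (hn : 0 < n) :
    hsNormSq (A - ∑ i ∈ Finset.range n, sval A (i + 1) • rankOne (u i) (v i)) =
      sInf {r : ℝ≥0∞ | ∃ L : H →L[ℝ] H, IsCompactOperator L ∧
        Module.rank ℝ (LinearMap.range (L : H →ₗ[ℝ] H)) ≤ (n : Cardinal) ∧ r = hsNormSq (A - L)} ∧
    sInf {r : ℝ≥0∞ | ∃ L : H →L[ℝ] H, IsCompactOperator L ∧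
        Module.rank ℝ (LinearMap.range (L : H →ₗ[ℝ] H)) ≤ (n : Cardinal) ∧ r = hsNormSq (A - L)} =
      ∑' i : ℕ, ENNReal.ofReal (sval A (n + 1 + i) ^ 2) := by
  set An : H →L[ℝ] H := ∑ i ∈ Finset.range n, sval A (i + 1) • rankOne (u i) (v i) with hAn
  set S : Set ℝ≥0∞ := {r : ℝ≥0∞ | ∃ L : H →L[ℝ] H, IsCompactOperator L ∧
        Module.rank ℝ (LinearMap.range (L : H →ₗ[ℝ] H)) ≤ (n : Cardinal) ∧ r = hsNormSq (A - L)} with hS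
  set T : ℝ≥0∞ := ∑' i : ℕ, ENNReal.ofReal (sval A (n + 1 + i) ^ 2) with hTdef
  -- membership of the truncation in the candidate set
  have hAn_prop := sum_rankOne_compact_rank u v (fun i => sval A (i + 1)) (Finset.range n)
  have h_mem : hsNormSq (A - An) ∈ S := by
    refine ⟨An, hAn_prop.1, ?_, rfl⟩
    simpa using hAn_prop.2
  have h1 : sInf S ≤ hsNormSq (A - An) := sInf_le h_mem
  -- lower bound: T ≤ every element of S
  have h2 : T ≤ sInf S := by
    refine le_sInf ?_
    rintro r ⟨L, hLc, hLr, rfl⟩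
    refine ENNReal.tsum_le_tsum fun i => ?_
    apply ENNReal.ofReal_le_ofReal
    have hs := sval_shift_le A L hLc n i hLr
    have h' : sval A (n + 1 + i) ≤ sval (A - L) (i + 1) := by
      rw [show n + 1 + i = n + i + 1 by ring]; exact hs
    exact pow_le_pow_left₀ (sval_nonneg _ _) h' 2
  -- upper bound: hsNormSq (A - An) ≤ T
  have h3 : hsNormSq (A - An) ≤ T := by
    refine ENNReal.tsum_le_tsum fun i => ?_
    apply ENNReal.ofReal_le_ofReal
    refine pow_le_pow_left₀ (sval_nonneg _ _) ?_ 2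
    -- sval (A - An) (i + 1) ≤ sval A (n + 1 + i)
    set D : H →L[ℝ] H := ∑ j ∈ Finset.range (n + i) \ Finset.range n,
      sval A (j + 1) • rankOne (u j) (v j) with hD
    have hsub : Finset.range n ⊆ Finset.range (n + i) :=
      Finset.range_subset_range.mpr (Nat.le_add_right n i)
    have hD_prop := sum_rankOne_compact_rank u v (fun j => sval A (j + 1))
      (Finset.range (n + i) \ Finset.range n)
    have hcard : (Finset.range (n + i) \ Finset.range n).card = i := by
      rw [Finset.card_sdiff_of_subset hsub]
      simp
    have hDrank : Module.rank ℝ (LinearMap.range (D : H →ₗ[ℝ] H)) ≤ ((i + 1 - 1 : ℕ) : Cardinal) := by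
      have := hD_prop.2
      rw [hcard] at this
      simpa using this
    have hstep : sval (A - An) (i + 1) ≤ ‖(A - An) - D‖ :=
      sval_le (A - An) (i + 1) hD_prop.1 hDrank
    have heq : (A - An) - D = A - ∑ j ∈ Finset.range (n + i),
        sval A (j + 1) • rankOne (u j) (v j) := by
      rw [hD, Finset.sum_sdiff_eq_sub hsub, hAn]
      abel
    rw [heq] at hstep
    refine hstep.trans ?_
    have := tail_norm_le A hu hv hexp (n + i)
    rw [show n + 1 + i = n + i + 1 by ring]
    exact this
  exact ⟨le_antisymm (h3.trans h2) h1, le_antisymm (h1.trans h3) h2⟩
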